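/- The discrete Wasserstein distance at time t satisfies the upper bound W(t) ≤ ∑_{i=1}^t W̃(i) + ∑_{j=1}^N n_t(y_j)·‖x_t − y_j‖, where W̃(i) is the optimal cost of the single-source LP at step i and n_t(y_j) are the remaining weights after t weight updates. -/

import Mathlib

theorem wasserstein_upper_bound_single_agent {M N t : ℕ}
    (hM : 0 < M) (hN : 0 < N) (ht : 0 < t) (htM : t ≤ M)
    (x : Fin t → EuclideanSpace ℝ (Fin 2)) (y : Fin N → EuclideanSpace ℝ (Fin 2))
    (n : ℕ → Fin N → ℝ) (hn0 : ∀ j, n 0 j = 1 / (N : ℝ))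
    (p : ℕ → Fin N → ℝ)
    (hp0 : ∀ i, i < t → ∀ j, 0 ≤ p i j)
    (hpsum : ∀ i, i < t → ∑ j, p i j = 1 / (M : ℝ))
    (hpcap : ∀ i, i < t → ∀ j, p i j ≤ min (n i j) (1 / (M : ℝ)))
    (hupd : ∀ i, i < t → ∀ j, n (i + 1) j = n i j - p i j)
    (hopt : ∀ i, ∀ hi : i < t, ∀ q : Fin N → ℝ,
      (∀ j, 0 ≤ q j) → (∑ j, q j = 1 / (M : ℝ)) →
      (∀ j, q j ≤ min (n i j) (1 / (M : ℝ))) →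
      ∑ j, p i j * ‖x ⟨i, hi⟩ - y j‖ ≤ ∑ j, q j * ‖x ⟨i, hi⟩ - y j‖) :
    sInf {w : ℝ | ∃ π : Fin t → Fin N → ℝ,
        (∀ i j, 0 ≤ π i j) ∧
        (∀ i : Fin t, ∑ j, π i j =
          1 / (M : ℝ) + if (i : ℕ) = t - 1 then ((M : ℝ) - t) / M else 0) ∧
        (∀ j, ∑ i, π i j = 1 / (N : ℝ)) ∧
        w = ∑ i, ∑ j, π i j * ‖x i - y j‖} ≤
      (∑ i : Fin t, ∑ j, p i j * ‖x i - y j‖) +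
        ∑ j, n t j * ‖x ⟨t - 1, Nat.sub_lt ht one_pos⟩ - y j‖ := by
  -- nonnegativity of the weights n
  have hnn : ∀ k, k ≤ t → ∀ j, 0 ≤ n k j := by
    intro k
    induction k with
    | zero => intro _ j; rw [hn0]; positivity
    | succ i ih =>
      intro hk j
      have hi : i < t := hk
      rw [hupd i hi j]
      have h1 : p i j ≤ n i j := le_trans (hpcap i hi j) (min_le_left _ _)
      linarith
  -- telescoping formula
  have htel : ∀ k, k ≤ t → ∀ j, n k j = n 0 j - ∑ i ∈ Finset.range k, p i j := by
    intro k
    induction k with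
    | zero => intro _ j; simp
    | succ i ih =>
      intro hk j
      rw [hupd i hk j, ih (le_of_lt hk) j, Finset.sum_range_succ]
      ring
  -- total remaining mass
  have hsum_nt : ∑ j, n t j = ((M : ℝ) - t) / M := by
    have : ∑ j, n t j = ∑ j, (n 0 j - ∑ i ∈ Finset.range t, p i j) :=
      Finset.sum_congr rfl fun j _ => htel t le_rfl j
    rw [this, Finset.sum_sub_distrib, Finset.sum_comm]
    have h1 : ∑ j, n 0 j = 1 := by
      simp [hn0, Finset.sum_const]
      field_simp
    have h2 : ∑ i ∈ Finset.range t, ∑ j, p i j = (t : ℝ) / M := by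
      rw [Finset.sum_congr rfl fun i hi => hpsum i (Finset.mem_range.mp hi)]
      simp [Finset.sum_const]
      ring
    rw [h1, h2]
    field_simp
  set a : Fin t := ⟨t - 1, Nat.sub_lt ht one_pos⟩ with ha
  have hiff : ∀ i : Fin t, ((i : ℕ) = t - 1) ↔ (i = a) := by
    intro i; constructor
    · intro h; exact Fin.ext h
    · intro h; rw [h]
  apply csInf_le
  · refine ⟨0, ?_⟩
    rintro w ⟨π, hpos, _, _, rfl⟩
    apply Finset.sum_nonneg; intro i _
    apply Finset.sum_nonneg; intro j _
    exact mul_nonneg (hpos i j) (norm_nonneg _)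
  · refine ⟨fun i j => p i j + if (i : ℕ) = t - 1 then n t j else 0, ?_, ?_, ?_, ?_⟩
    · intro i j
      have h1 := hp0 i i.isLt j
      have h2 := hnn t le_rfl j
      dsimp only
      split <;> linarith
    · intro i
      rw [Finset.sum_add_distrib, hpsum i i.isLt]
      congr 1
      split
      · simp [hsum_nt]
      · simp
    · intro j
      rw [Finset.sum_add_distrib]
      have h1 : ∑ i : Fin t, (if (i : ℕ) = t - 1 then n t j else 0) = n t j := by
        rw [Finset.sum_congr rfl fun i _ => by rw [if_congr (hiff i) rfl rfl]]
        simp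
      have h2 : ∑ i : Fin t, p i j = ∑ i ∈ Finset.range t, p i j := by
        rw [Finset.sum_range fun i => p i j]
      rw [h1, h2]
      have := htel t le_rfl j
      rw [hn0 j] at this
      linarith
    · have key : ∀ i : Fin t,
        ∑ j, (p i j + if (i : ℕ) = t - 1 then n t j else 0) * ‖x i - y j‖
          = (∑ j, p i j * ‖x i - y j‖)
            + (if i = a then ∑ j, n t j * ‖x i - y j‖ else 0) := by
        intro i
        rw [Finset.sum_congr rfl fun j _ => add_mul (p i j) _ _, Finset.sum_add_distrib]
        congr 1
        by_cases h : (i : ℕ) = t - 1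
        · have : i = a := Fin.ext h
          simp [h, this]
          exact fun hh => absurd (by rw [← this]; exact h) hh
        · have : ¬ i = a := fun hh => h (by rw [hh])
          simp [h, this]
      rw [Finset.sum_congr rfl fun i _ => key i, Finset.sum_add_distrib]
      congr 1
      simp
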